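/- (Lemme 10) Let k be a finite field of odd characteristic, let ε ∈ k be a nonzero square, set ε₁ = ε₂ = ε, and let ε₁₂ ∈ k be an arbitrary nonzero element. Define sq : k → ZMod 2 by sq(x) = 0 if x is a square in k and sq(x) = 1 otherwise, define θ̄ : k → ZMod 2 × ZMod 2 by θ̄(0) = (sq(ε₁·ε₂), sq(−ε₁)), θ̄(ε₁) = (sq(ε₁), sq(ε₁·ε₁₂)), and θ̄(t) = (sq(t), sq(t − ε₁)) for t ∉ {0, ε₁}, and let Ω = {t ∈ k : t·(t − ε₁)·(t − ε₂) is a square in k}. Then the subgroup of (ZMod 2) × (ZMod 2) generated by the image θ̄(Ω) equals the subgroup {0} × (ZMod 2), i.e. the subgroup {(0,0), (0,1)}. -/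

import Mathlib

open scoped Classical

/-- `sqClass x = 0` if `x` is a square, `1` otherwise. -/
noncomputable def sqClass {k : Type*} [Field k] (x : k) : ZMod 2 :=
  if IsSquare x then 0 else 1

/-- The map `θ̄ : k → ZMod 2 × ZMod 2` attached to `ε₁, ε₂, ε₁₂`. -/
noncomputable def thetaBar {k : Type*} [Field k] (ε₁ ε₂ ε₁₂ : k) (t : k) :
    ZMod 2 × ZMod 2 :=
  if t = 0 then (sqClass (ε₁ * ε₂), sqClass (-ε₁))
  else if t = ε₁ then (sqClass ε₁, sqClass (ε₁ * ε₁₂))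
  else (sqClass t, sqClass (t - ε₁))

lemma isSquare_mul_left_iff {k : Type*} [Field k] {a : k} (ha : IsSquare a)
    (ha0 : a ≠ 0) (b : k) : IsSquare (a * b) ↔ IsSquare b := by
  obtain ⟨r, rfl⟩ := ha
  have hr : r ≠ 0 := by intro h; simp [h] at ha0
  constructor
  · rintro ⟨s, hs⟩
    exact ⟨s / r, by field_simp; linear_combination hs⟩
  · rintro ⟨s, rfl⟩
    exact ⟨r * s, by ring⟩

theorem lemme10 {k : Type*} [Field k] [Fintype k] (hchar : ringChar k ≠ 2)
    (ε : k) (hε : ε ≠ 0) (hsq : IsSquare ε) (ε₁₂ : k) (hε₁₂ : ε₁₂ ≠ 0) :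
    AddSubgroup.closure
        (thetaBar ε ε ε₁₂ '' {t : k | IsSquare (t * (t - ε) * (t - ε))}) =
      AddSubgroup.prod (⊥ : AddSubgroup (ZMod 2)) (⊤ : AddSubgroup (ZMod 2)) := by
  -- There exists t in Ω mapping to (0,1).
  have key : ∃ t : k, IsSquare (t * (t - ε) * (t - ε)) ∧
      thetaBar ε ε ε₁₂ t = (0, 1) := by
    by_cases hneg : IsSquare (-ε)
    · by_cases h12 : IsSquare (ε * ε₁₂)
      · -- hard case: -1 is a square, use construction with a nonsquare c
        have hneg1 : IsSquare (-1 : k) := by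
          have := (isSquare_mul_left_iff hsq hε (-1)).mp (by simpa using hneg)
          exact this
        obtain ⟨c, hc⟩ := FiniteField.exists_nonsquare (F := k) hchar
        have hc0 : c ≠ 0 := by rintro rfl; exact hc ⟨0, by ring⟩
        have hc1 : c ≠ 1 := by rintro rfl; exact hc ⟨1, by ring⟩
        have hcm1 : c ≠ -1 := by rintro rfl; exact hc hneg1
        have hcsub : c - 1 ≠ 0 := sub_ne_zero.mpr hc1
        have hcadd : c + 1 ≠ 0 := by
          intro h; exact hcm1 (by linear_combination h)
        have h2 : (2 : k) ≠ 0 := Ring.two_ne_zero hchar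
        have h4 : (4 : k) ≠ 0 := by
          have h42 : (4 : k) = 2 * 2 := by norm_num
          rw [h42]; exact mul_ne_zero h2 h2
        set b : k := (c + 1) / (c - 1) with hb
        have hbne : b ≠ 0 := div_ne_zero hcadd hcsub
        have hkey : b ^ 2 - 1 = 4 * c / (c - 1) ^ 2 := by
          rw [hb, div_pow, eq_div_iff (pow_ne_zero 2 hcsub), sub_mul,
            div_mul_cancel₀ _ (pow_ne_zero 2 hcsub)]; ring
        have hb2ne1 : b ^ 2 ≠ 1 := by
          have hne : (4 : k) * c / (c - 1) ^ 2 ≠ 0 :=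
            div_ne_zero (mul_ne_zero h4 hc0) (pow_ne_zero 2 hcsub)
          intro h
          apply hne
          rw [← hkey, h]; ring
        refine ⟨ε * b ^ 2, ?_, ?_⟩
        · -- t(t-ε)² is a square
          have : ε * b ^ 2 * (ε * b ^ 2 - ε) * (ε * b ^ 2 - ε)
              = (ε * b ^ 2) * ((ε * (b ^ 2 - 1)) * (ε * (b ^ 2 - 1))) := by ring
          rw [this]
          exact IsSquare.mul (hsq.mul ⟨b, by ring⟩) ⟨_, rfl⟩
        · have ht0 : ε * b ^ 2 ≠ 0 := mul_ne_zero hε (pow_ne_zero 2 hbne)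
          have htε : ε * b ^ 2 ≠ ε := by
            intro h
            apply hb2ne1
            have : ε * b ^ 2 = ε * 1 := by rw [h]; ring
            exact mul_left_cancel₀ hε this
          rw [thetaBar, if_neg ht0, if_neg htε]
          have hfst : sqClass (ε * b ^ 2) = 0 := by
            rw [sqClass, if_pos (hsq.mul ⟨b, by ring⟩)]
          have hsnd : sqClass (ε * b ^ 2 - ε) = 1 := by
            rw [sqClass, if_neg]
            intro hcon
            apply hc
            have heq : ε * b ^ 2 - ε = (ε * 4 / (c - 1) ^ 2) * c := by
              have : ε * b ^ 2 - ε = ε * (b ^ 2 - 1) := by ring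
              rw [this, hkey]; field_simp
            rw [heq] at hcon
            have hfac : IsSquare (ε * 4 / (c - 1) ^ 2) := by
              obtain ⟨e, he⟩ := hsq
              exact ⟨e * 2 / (c - 1), by rw [he]; field_simp; ring⟩
            have hfacne : ε * 4 / (c - 1) ^ 2 ≠ 0 := by
              exact div_ne_zero (mul_ne_zero hε h4) (pow_ne_zero 2 hcsub)
            exact (isSquare_mul_left_iff hfac hfacne c).mp hcon
          rw [hfst, hsnd]
      · -- use t = ε
        refine ⟨ε, ⟨0, by ring⟩, ?_⟩
        rw [thetaBar, if_neg hε, if_pos rfl, sqClass, if_pos hsq, sqClass, if_neg h12]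
    · -- use t = 0
      refine ⟨0, ⟨0, by ring⟩, ?_⟩
      rw [thetaBar, if_pos rfl, sqClass, if_pos (hsq.mul hsq), sqClass, if_neg hneg]
  obtain ⟨t₀, ht₀Ω, ht₀⟩ := key
  apply le_antisymm
  · rw [AddSubgroup.closure_le]
    rintro x ⟨t, htΩ, rfl⟩
    rw [SetLike.mem_coe, AddSubgroup.mem_prod]
    refine ⟨?_, trivial⟩
    simp only [AddSubgroup.mem_bot]
    rw [thetaBar]
    split_ifs with h1 h2
    · simp only
      rw [sqClass, if_pos (hsq.mul hsq)]
    · simp only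
      rw [sqClass, if_pos hsq]
    · simp only
      rw [sqClass, if_pos]
      have hsub : t - ε ≠ 0 := sub_ne_zero.mpr h2
      have hsq2 : IsSquare ((t - ε) * (t - ε)) := ⟨_, rfl⟩
      have : IsSquare ((t - ε) * (t - ε) * t) := by
        have heq : (t - ε) * (t - ε) * t = t * (t - ε) * (t - ε) := by ring
        rw [heq]; exact htΩ
      exact (isSquare_mul_left_iff hsq2 (mul_ne_zero hsub hsub) t).mp this
  · rintro ⟨a, b⟩ hab
    rw [AddSubgroup.mem_prod] at hab
    obtain ⟨ha, -⟩ := hab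
    rw [AddSubgroup.mem_bot] at ha
    subst ha
    have hb : b = 0 ∨ b = 1 := by fin_cases b; exacts [Or.inl rfl, Or.inr rfl]
    rcases hb with rfl | rfl
    · exact zero_mem _
    · rw [← ht₀]
      exact AddSubgroup.subset_closure ⟨t₀, ht₀Ω, rfl⟩
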